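/- Let f be an expansive homeomorphism of a compact metric space. If f has the local weak specification property, then f has the local specification property (i.e., the tracing points can be chosen periodic). -/

import Mathlib

open MeasureTheory Filter Metric Topology

variable {X : Type*}

/-- Iterate of a homeomorphism by an integer. -/
noncomputable def zit [TopologicalSpace X] (f : X ≃ₜ X) (i : ℤ) (x : X) : X :=
  (f.toEquiv ^ i) x

section Zit

variable [TopologicalSpace X] (f : X ≃ₜ X)

lemma zit_add (i j : ℤ) (x : X) : zit f (i + j) x = zit f i (zit f j x) := by
  simp [zit, zpow_add, Equiv.Perm.mul_apply]

lemma zit_zero (x : X) : zit f 0 x = x := by simp [zit]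

lemma zit_one (x : X) : zit f 1 x = f x := by simp [zit]

lemma zit_neg_one (x : X) : zit f (-1) x = f.symm x := by simp [zit, Equiv.Perm.inv_def]

lemma zit_natCast (m : ℕ) (x : X) : zit f (m : ℤ) x = f^[m] x := by
  induction m with
  | zero => simp [zit]
  | succ n ih =>
    have h : ((n + 1 : ℕ) : ℤ) = 1 + (n : ℤ) := by push_cast; ring
    rw [h, zit_add, ih, zit_one, Function.iterate_succ_apply']

lemma zit_continuous (i : ℤ) : Continuous (zit f i) := by
  induction i using Int.induction_on with
  | zero => simpa [show zit f 0 = id from funext (zit_zero f)] using (continuous_id : Continuous fun x : X => x)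
  | succ n ih =>
    have h : zit f ((n : ℤ) + 1) = fun x => f (zit f n x) := by
      funext x; rw [add_comm, zit_add, zit_one]
    rw [h]; exact f.continuous.comp ih
  | pred n ih =>
    have h : zit f (-(n : ℤ) - 1) = fun x => f.symm (zit f (-n) x) := by
      funext x
      have h2 : (-(n : ℤ) - 1) = (-1) + (-(n : ℤ)) := by ring
      rw [h2, zit_add, zit_neg_one]
    rw [h]; exact f.symm.continuous.comp ih

end Zit

/-- The dynamical ball `Γ_δ(x)` of a homeomorphism. -/
def Gamma [MetricSpace X] (f : X ≃ₜ X) (δ : ℝ) (x : X) : Set X :=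
  {y | ∀ i : ℤ, dist (zit f i x) (zit f i y) ≤ δ}

/-- Shadowing property for one-sided (ℕ-indexed) pseudo-orbits. -/
def ShadowingN [MetricSpace X] (f : X → X) : Prop :=
  ∀ ε > (0 : ℝ), ∃ δ > (0 : ℝ), ∀ x : ℕ → X,
    (∀ i, dist (f (x i)) (x (i + 1)) < δ) →
    ∃ y, ∀ i, dist (f^[i] y) (x i) < ε

/-- Shadowing property for two-sided (ℤ-indexed) pseudo-orbits of a homeomorphism. -/
def ShadowingZ [MetricSpace X] (f : X ≃ₜ X) : Prop :=
  ∀ ε > (0 : ℝ), ∃ δ > (0 : ℝ), ∀ x : ℤ → X,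
    (∀ i, dist (f (x i)) (x (i + 1)) < δ) →
    ∃ y, ∀ i, dist (zit f i y) (x i) < ε

/-- Local weak specification property. -/
def LocalWeakSpec [MetricSpace X] (f : X → X) : Prop :=
  ∀ ε > (0 : ℝ), ∃ N : ℕ, ∃ δ > (0 : ℝ), ∀ n, N ≤ n → ∀ (k : ℕ) (x : ℕ → X),
    (∀ i, i + 1 < k → dist (f^[n] (x i)) (x (i + 1)) < δ) →
    ∃ y, ∀ i < k, ∀ j, i * n ≤ j → j < (i + 1) * n →
      dist (f^[j] y) (f^[j - i * n] (x i)) < ε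

/-- Local specification property (tracing point is periodic when the chain closes up). -/
def LocalSpec [MetricSpace X] (f : X → X) : Prop :=
  ∀ ε > (0 : ℝ), ∃ N : ℕ, ∃ δ > (0 : ℝ), ∀ n, N ≤ n → ∀ k, 1 ≤ k → ∀ x : ℕ → X,
    (∀ i < k, dist (f^[n] (x i)) (x ((i + 1) % k)) < δ) →
    ∃ y, f^[k * n] y = y ∧ ∀ i < k, ∀ j, i * n ≤ j → j < (i + 1) * n →
      dist (f^[j] y) (f^[j - i * n] (x i)) < ε

/-- A point is periodic for `f`. -/
def IsPeriodicPt' (f : X → X) (y : X) : Prop := ∃ m, 1 ≤ m ∧ f^[m] y = y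

/-- Periodic shadowing property for one-sided pseudo-orbits. -/
def PeriodicShadowingN [MetricSpace X] (f : X → X) : Prop :=
  ∀ ε > (0 : ℝ), ∃ δ > (0 : ℝ), ∀ x : ℕ → X,
    (∀ i, dist (f (x i)) (x (i + 1)) < δ) →
    (∃ M, 1 ≤ M ∧ ∀ i, x (i + M) = x i) →
    ∃ y, IsPeriodicPt' f y ∧ ∀ i, dist (f^[i] y) (x i) < ε

/-- Periodic shadowing property for two-sided pseudo-orbits of a homeomorphism. -/
def PeriodicShadowingZ [MetricSpace X] (f : X ≃ₜ X) : Prop :=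
  ∀ ε > (0 : ℝ), ∃ δ > (0 : ℝ), ∀ x : ℤ → X,
    (∀ i, dist (f (x i)) (x (i + 1)) < δ) →
    (∃ M : ℕ, 1 ≤ M ∧ ∀ i, x (i + M) = x i) →
    ∃ y, IsPeriodicPt' f y ∧ ∀ i, dist (zit f i y) (x i) < ε

/-- Strong periodic shadowing: the shadowing point has the same period as the pseudo-orbit. -/
def StrongPeriodicShadowingZ [MetricSpace X] (f : X ≃ₜ X) : Prop :=
  ∀ ε > (0 : ℝ), ∃ δ > (0 : ℝ), ∀ (N : ℕ), 1 ≤ N → ∀ x : ℤ → X,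
    (∀ i, dist (f (x i)) (x (i + 1)) < δ) →
    (∀ i, x (i + N) = x i) →
    ∃ y, f^[N] y = y ∧ ∀ i, dist (zit f i y) (x i) < ε

/-- Topological transitivity of a homeomorphism (some point has dense two-sided orbit). -/
def TransitiveZ [TopologicalSpace X] (f : X ≃ₜ X) : Prop :=
  ∃ x : X, Dense (Set.range fun n : ℤ => zit f n x)

/-- Measure expansiveness of a homeomorphism. -/
def MeasExpansive [MetricSpace X] [MeasurableSpace X] (f : X ≃ₜ X) : Prop :=
  ∃ δ > (0 : ℝ), ∀ μ : Measure X, IsProbabilityMeasure μ →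
    MeasurePreserving f μ μ → (∀ z : X, μ {z} = 0) →
    ∀ x : X, μ (Gamma f δ x) = 0

/-- Strong measure expansiveness of a homeomorphism. -/
def StrongMeasExpansive [MetricSpace X] [MeasurableSpace X] (f : X ≃ₜ X) : Prop :=
  ∃ δ > (0 : ℝ), ∀ μ : Measure X, IsProbabilityMeasure μ →
    MeasurePreserving f μ μ → ∀ x : X, μ (Gamma f δ x) = μ {x}

/-- Strong measure expansiveness with a specified constant. -/
def StrongMeasExpansiveWith [MetricSpace X] [MeasurableSpace X] (f : X ≃ₜ X) (δ : ℝ) : Prop :=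
  ∀ μ : Measure X, IsProbabilityMeasure μ →
    MeasurePreserving f μ μ → ∀ x : X, μ (Gamma f δ x) = μ {x}

theorem expansive_localWeakSpec_implies_localSpec
    [MetricSpace X] [CompactSpace X] (f : X ≃ₜ X)
    (hexp : ∃ c > (0 : ℝ), ∀ x y : X,
      (∀ i : ℤ, dist (zit f i x) (zit f i y) ≤ c) → x = y)
    (hspec : LocalWeakSpec (⇑f)) : LocalSpec (⇑f) := by
  obtain ⟨c, hc, hexp⟩ := hexp
  intro ε hε
  set ε' : ℝ := min (ε / 2) (c / 2) with hε'def
  have hε'pos : 0 < ε' := lt_min (by linarith) (by linarith)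
  have hε'ε : ε' < ε := lt_of_le_of_lt (min_le_left _ _) (by linarith)
  have hε'c : 2 * ε' ≤ c := by
    have := min_le_right (ε / 2) (c / 2); linarith
  obtain ⟨N, δ, hδ, hS⟩ := hspec ε' hε'pos
  refine ⟨max N 1, δ, hδ, ?_⟩
  intro n hn k hk x hx
  have hn1 : 1 ≤ n := le_trans (le_max_right N 1) hn
  have hnN : N ≤ n := le_trans (le_max_left N 1) hn
  have hkn : 0 < k * n := Nat.mul_pos hk hn1
  have hknZ : (0 : ℤ) < ((k * n : ℕ) : ℤ) := by exact_mod_cast hkn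
  have hknne : ((k * n : ℕ) : ℤ) ≠ 0 := ne_of_gt hknZ
  -- periodic pseudo-orbit chain estimate
  have hchain : ∀ i : ℕ, dist (f^[n] (x (i % k))) (x ((i + 1) % k)) < δ := by
    intro i
    have h1 : (i % k + 1) % k = (i + 1) % k := Nat.mod_add_mod i k 1
    have h2 := hx (i % k) (Nat.mod_lt i hk)
    rwa [h1] at h2
  -- the target orbit pattern
  set t : ℕ → X := fun j => f^[j % n] (x (j / n % k)) with ht
  have htper : ∀ r q : ℕ, t (r + k * n * q) = t r := by
    intro r q
    have e1 : r + k * n * q = r + n * (k * q) := by ring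
    have e3 : (r + n * (k * q)) / n = r / n + k * q := Nat.add_mul_div_left r (k * q) hn1
    simp only [ht, e1, Nat.add_mul_mod_self_left, e3]
  -- tracing points for arbitrarily long chains
  have htrace : ∀ s : ℕ, ∃ y : X, ∀ j, j < 2 * s * k * n → dist (f^[j] y) (t j) < ε' := by
    intro s
    obtain ⟨y, hy⟩ := hS n hnN (2 * s * k) (fun i => x (i % k)) (fun i _ => hchain i)
    refine ⟨y, fun j hj => ?_⟩
    have hdiv : j / n < 2 * s * k := (Nat.div_lt_iff_lt_mul hn1).mpr hj
    have e1 : j / n * n + j % n = j := Nat.div_add_mod' j n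
    have hmn : j % n < n := Nat.mod_lt j hn1
    have h2 : j < (j / n + 1) * n := by rw [add_mul, one_mul]; omega
    have h3 : j - j / n * n = j % n := by omega
    have h4 := hy (j / n) hdiv j (Nat.div_mul_le_self j n) h2
    rw [h3] at h4
    exact h4
  choose y hy using htrace
  set z : ℕ → X := fun s => f^[s * (k * n)] (y s) with hzdef
  set T : ℤ → X := fun i => t (i % ((k * n : ℕ) : ℤ)).toNat with hT
  -- key estimate
  have hclaim : ∀ s : ℕ, ∀ i : ℤ, i.natAbs < s * (k * n) →
      dist (zit f i (z s)) (T i) < ε' := by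
    intro s i hi
    obtain ⟨M, hM⟩ : ∃ M : ℕ, M = s * (k * n) := ⟨_, rfl⟩
    rw [← hM] at hi
    have hMZ : (M : ℤ) = (s : ℤ) * ((k : ℤ) * (n : ℤ)) := by rw [hM]; push_cast; ring
    set a : ℤ := i % ((k * n : ℕ) : ℤ) with ha
    set b : ℤ := i / ((k * n : ℕ) : ℤ) with hb
    have he : a + ((k * n : ℕ) : ℤ) * b = i := Int.emod_add_mul_ediv i _
    have he' : a + (k : ℤ) * (n : ℤ) * b = i := by push_cast at he; exact he
    have ha0 : 0 ≤ a := Int.emod_nonneg i hknne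
    have ha1 : a < ((k * n : ℕ) : ℤ) := Int.emod_lt_of_pos i hknZ
    have hbs : -(s : ℤ) ≤ b := by
      have h1 : (-(s : ℤ)) * ((k * n : ℕ) : ℤ) ≤ i := by
        have h2 : (-(s : ℤ)) * ((k * n : ℕ) : ℤ) = -(M : ℤ) := by
          push_cast; rw [hMZ]; ring
        rw [h2]; omega
      have h3 := Int.ediv_le_ediv hknZ h1
      rwa [Int.mul_ediv_cancel _ hknne] at h3
    set q' : ℕ := (b + (s : ℤ)).toNat with hq'
    have hq'0 : ((q' : ℕ) : ℤ) = b + (s : ℤ) := Int.toNat_of_nonneg (by omega)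
    set j : ℕ := (i + (M : ℤ)).toNat with hj
    have hj0 : ((j : ℕ) : ℤ) = i + (M : ℤ) := Int.toNat_of_nonneg (by omega)
    have hjeq : j = a.toNat + k * n * q' := by
      have h4 : ((a.toNat + k * n * q' : ℕ) : ℤ) = ((j : ℕ) : ℤ) := by
        push_cast [Int.toNat_of_nonneg ha0, hq'0, hj0]
        rw [hMZ]
        linear_combination he'
      exact_mod_cast h4.symm
    have h7 : i + ((s * (k * n) : ℕ) : ℤ) = ((j : ℕ) : ℤ) := by rw [hj0, hM]
    have hzeq : zit f i (z s) = f^[j] (y s) := by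
      simp only [hzdef]
      rw [← zit_natCast f (s * (k * n)) (y s), ← zit_add, h7, zit_natCast]
    have h2M : 2 * s * k * n = 2 * M := by rw [hM]; ring
    have hjlt : j < 2 * s * k * n := by rw [h2M]; omega
    have hTi : T i = t a.toNat := by
      simp only [hT]; rfl
    rw [hzeq, hTi, ← htper a.toNat q', ← hjeq]
    exact hy s j hjlt
  -- pass to a limit
  obtain ⟨zl, -, φ, hφ, hlim⟩ := isCompact_univ.tendsto_subseq (fun s : ℕ => Set.mem_univ (z s))
  have hZ : ∀ i : ℤ, dist (zit f i zl) (T i) ≤ ε' := by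
    intro i
    have h1 : Tendsto (fun l => dist (zit f i (z (φ l))) (T i)) atTop
        (𝓝 (dist (zit f i zl) (T i))) :=
      (((zit_continuous f i).tendsto zl).comp hlim).dist tendsto_const_nhds
    refine le_of_tendsto h1 ?_
    filter_upwards [eventually_ge_atTop (i.natAbs + 1)] with l hl
    have hφl : l ≤ φ l := hφ.le_apply
    have h2 : φ l ≤ φ l * (k * n) := Nat.le_mul_of_pos_right _ hkn
    exact (hclaim (φ l) i (lt_of_lt_of_le (by omega) h2)).le
  have hTper : ∀ i : ℤ, T (i + ((k * n : ℕ) : ℤ)) = T i := by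
    intro i
    have h1 : (i + ((k * n : ℕ) : ℤ)) % ((k * n : ℕ) : ℤ) = i % ((k * n : ℕ) : ℤ) := by
      conv_lhs => rw [show i + ((k * n : ℕ) : ℤ) = i + ((k * n : ℕ) : ℤ) * 1 by ring]
      exact Int.add_mul_emod_self_left i ((k * n : ℕ) : ℤ) 1
    simp only [hT, h1]
  have hper : f^[k * n] zl = zl := by
    refine hexp _ _ fun i => ?_
    have e1 : zit f i (f^[k * n] zl) = zit f (i + ((k * n : ℕ) : ℤ)) zl := by
      rw [zit_add, zit_natCast]
    calc dist (zit f i (f^[k * n] zl)) (zit f i zl)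
        ≤ dist (zit f i (f^[k * n] zl)) (T i) + dist (T i) (zit f i zl) := dist_triangle _ _ _
      _ ≤ ε' + ε' := by
          refine add_le_add ?_ ?_
          · rw [e1, ← hTper i]; exact hZ _
          · rw [dist_comm]; exact hZ i
      _ ≤ c := by linarith
  refine ⟨zl, hper, ?_⟩
  intro i hik j hj1 hj2
  have hjkn : j < k * n := lt_of_lt_of_le hj2 (Nat.mul_le_mul_right n hik)
  have hdiv : j / n = i := Nat.div_eq_of_lt_le hj1 hj2
  have hmod : j % n = j - i * n := by
    have e1 : j / n * n + j % n = j := Nat.div_add_mod' j n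
    rw [hdiv] at e1
    omega
  have hTj : T ((j : ℕ) : ℤ) = f^[j - i * n] (x i) := by
    have h1 : ((j : ℕ) : ℤ) % ((k * n : ℕ) : ℤ) = ((j : ℕ) : ℤ) :=
      Int.emod_eq_of_lt (Int.natCast_nonneg j) (by exact_mod_cast hjkn)
    simp only [hT, h1, Int.toNat_natCast, ht]
    rw [hdiv, Nat.mod_eq_of_lt hik, hmod]
  calc dist (f^[j] zl) (f^[j - i * n] (x i))
      = dist (zit f ((j : ℕ) : ℤ) zl) (T ((j : ℕ) : ℤ)) := by rw [zit_natCast, hTj]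
    _ ≤ ε' := hZ _
    _ < ε := hε'ε
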